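/- Strong polynomial tractability criterion: assume m_0 = 1 and that α = lim_{j→∞} a_j/log j exists and is positive. Then for any τ > 1/(α log ω^{-1}), sup_s Σ_{k=1}^∞ λ_{s,k}^τ < ∞; conversely if α = 0 then for every τ > 0 and q ≥ 0, sup_s (Σ_{k=1}^∞ λ_{s,k}^τ)^{1/τ} s^{-q} = ∞. -/

import Mathlib

open scoped ENNReal

open Filter Real


lemma tsum_pi_prod : ∀ (s : ℕ) (g : Fin s → ℕ → ℝ≥0∞),
    (∑' k : Fin s → ℕ, ∏ j : Fin s, g j (k j)) = ∏ j : Fin s, ∑' n, g j n := by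
  intro s
  induction s with
  | zero =>
    intro g
    have : ∀ k : Fin 0 → ℕ, (∏ j : Fin 0, g j (k j)) = 1 := by intro k; simp
    simp only [this]
    rw [tsum_eq_single (fun i : Fin 0 => i.elim0)]
    · simp
    · intro b hb; exact absurd (funext fun i => i.elim0) hb
  | succ n ih =>
    intro g
    rw [← (Fin.consEquiv (fun _ : Fin (n+1) => ℕ)).tsum_eq, ENNReal.tsum_prod']
    have h1 : ∀ (x : ℕ) (f : Fin n → ℕ),
        (∏ j : Fin (n+1), g j ((Fin.consEquiv (fun _ : Fin (n+1) => ℕ)) (x, f) j))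
          = g 0 x * ∏ j : Fin n, g j.succ (f j) := by
      intro x f
      rw [Fin.prod_univ_succ]
      simp [Fin.consEquiv]
    simp only [h1]
    simp only [ENNReal.tsum_mul_left, ENNReal.tsum_mul_right]
    rw [ih (fun j => g j.succ), Fin.prod_univ_succ]


lemma summable_of_eventually_le {f g : ℕ → ℝ} (hf : ∀ n, 0 ≤ f n)
    (h : ∀ᶠ n in atTop, f n ≤ g n) (hg : Summable g) : Summable f := by
  obtain ⟨N, hN⟩ := eventually_atTop.mp h
  rw [← summable_nat_add_iff N]
  exact Summable.of_nonneg_of_le (fun n => hf _) (fun n => hN _ (by omega))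
    ((summable_nat_add_iff N).mpr hg)

lemma log_le_eventually {K c : ℝ} (hK : 0 < K) (hc : 0 < c) :
    ∀ᶠ n : ℕ in atTop, Real.log ((n : ℝ) + 1) ≤ K * ((n : ℝ) + 1) ^ c := by
  have h := (isLittleO_log_rpow_atTop hc).def hK
  have ht : Tendsto (fun n : ℕ => (n : ℝ) + 1) atTop atTop :=
    tendsto_atTop_add_const_right atTop 1 tendsto_natCast_atTop_atTop
  filter_upwards [ht.eventually h] with n hn
  calc Real.log ((n : ℝ) + 1) ≤ ‖Real.log ((n : ℝ) + 1)‖ := le_abs_self _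
    _ ≤ K * ‖((n : ℝ) + 1) ^ c‖ := hn
    _ = K * ((n : ℝ) + 1) ^ c := by
        rw [Real.norm_eq_abs, abs_of_nonneg (Real.rpow_nonneg (by positivity) _)]

lemma summableC {ω τ a0 b₀ : ℝ} (hω : ω ∈ Set.Ioo (0:ℝ) 1) (hτ : 0 < τ) (ha0 : 0 < a0)
    (hb₀ : 0 < b₀) :
    Summable (fun n : ℕ => ω ^ (τ * a0 * (((n : ℝ) + 1) ^ b₀ - 1))) := by
  set L : ℝ := Real.log ω⁻¹ with hLdef
  have hL : 0 < L := Real.log_pos ((one_lt_inv₀ hω.1).mpr hω.2)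
  have hlogω : Real.log ω = -L := by rw [hLdef, Real.log_inv]; ring
  set K : ℝ := τ * a0 * L with hK
  have hK0 : 0 < K := by positivity
  have hg : Summable (fun n : ℕ => ((n : ℝ) + 1) ^ (-2 : ℝ)) := by
    have := (Real.summable_nat_rpow (p := (-2:ℝ))).mpr (by norm_num)
    have h2 := (summable_nat_add_iff 1).mpr this
    refine h2.congr fun n => ?_
    push_cast
    ring_nf
  refine summable_of_eventually_le (fun n => Real.rpow_nonneg hω.1.le _) ?_ hg
  have hev1 := log_le_eventually (K := K / 8) (c := b₀) (by positivity) hb₀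
  have hev2 : ∀ᶠ n : ℕ in atTop, (2 : ℝ) ≤ ((n : ℝ) + 1) ^ b₀ := by
    have ht : Tendsto (fun n : ℕ => ((n : ℝ) + 1) ^ b₀) atTop atTop :=
      (tendsto_rpow_atTop hb₀).comp
        (tendsto_atTop_add_const_right atTop 1 tendsto_natCast_atTop_atTop)
    exact ht.eventually_ge_atTop 2
  filter_upwards [hev1, hev2] with n h1 h2
  have hn1 : (0:ℝ) < (n : ℝ) + 1 := by positivity
  have hlogn : 0 ≤ Real.log ((n : ℝ) + 1) := Real.log_nonneg (by linarith)
  set y : ℝ := ((n : ℝ) + 1) ^ b₀ with hy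
  rw [Real.rpow_def_of_pos hω.1, Real.rpow_def_of_pos hn1]
  apply Real.exp_le_exp.mpr
  rw [hlogω]
  show (-L) * (τ * a0 * (y - 1)) ≤ _
  have key : 2 * Real.log ((n:ℝ)+1) ≤ K * (y - 1) := by
    nlinarith [h1, h2, hK0]
  calc (-L) * (τ * a0 * (y - 1))
      = -(K * (y - 1)) := by rw [hK]; ring
    _ ≤ -(2 * Real.log ((n:ℝ)+1)) := by linarith
    _ ≤ Real.log ((n:ℝ)+1) * (-2) := by linarith

lemma T_upper {ω τ b₀ : ℝ} {a b : ℕ → ℝ} {m : ℕ → ℕ} {M : ℕ}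
    (hω : ω ∈ Set.Ioo (0:ℝ) 1) (hτ : 0 < τ) (ha : ∀ j, 0 < a j) (hamono : Monotone a)
    (hb₀ : 0 < b₀) (hb : ∀ j, b₀ ≤ b j) (hmbd : ∀ k, m k ≤ M) (hm0 : m 0 = 1) (j : ℕ) :
    (∑' n : ℕ, ((m n : ℝ≥0∞) * ENNReal.ofReal (ω ^ (τ * a j * ((n : ℝ) ^ (b j))))))
      ≤ 1 + ENNReal.ofReal ((M : ℝ) *
          (∑' n : ℕ, ω ^ (τ * a 0 * (((n : ℝ) + 1) ^ b₀ - 1))) * ω ^ (τ * a j)) := by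
  set f : ℕ → ℝ≥0∞ := fun n => ((m n : ℝ≥0∞) * ENNReal.ofReal (ω ^ (τ * a j * ((n : ℝ) ^ (b j)))))
  have hsum : ∀ g : ℕ → ℝ≥0∞, Summable g := fun g => ENNReal.summable
  have h0 : f 0 = 1 := by
    simp only [f, hm0, Nat.cast_one, Nat.cast_zero, one_mul]
    rw [Real.zero_rpow (lt_of_lt_of_le hb₀ (hb j)).ne', mul_zero, Real.rpow_zero,
      ENNReal.ofReal_one]
  have hrw : (∑' n, f n) = f 0 + ∑' n, f (n + 1) := tsum_eq_zero_add' (hsum _)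
  rw [show (∑' n : ℕ, ((m n : ℝ≥0∞) * ENNReal.ofReal (ω ^ (τ * a j * ((n : ℝ) ^ (b j))))))
      = (∑' n, f n) from rfl, hrw, h0]
  gcongr
  set c : ℕ → ℝ := fun n => ω ^ (τ * a 0 * (((n : ℝ) + 1) ^ b₀ - 1)) with hc
  have hC : Summable c := summableC hω hτ (ha 0) hb₀
  have step : ∀ n : ℕ, f (n + 1) ≤ (M : ℝ≥0∞) * ENNReal.ofReal (ω ^ (τ * a j) * c n) := by
    intro n
    have hn1 : (1:ℝ) ≤ ((n:ℕ):ℝ) + 1 := by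
      have := Nat.cast_nonneg (α := ℝ) n; linarith
    have hcast : (((n+1 : ℕ)):ℝ) = (n:ℝ) + 1 := by push_cast; ring
    have hy1 : (1:ℝ) ≤ ((n:ℝ) + 1) ^ b₀ := Real.one_le_rpow hn1 hb₀.le
    have hexp : τ * a j + τ * a 0 * (((n:ℝ) + 1) ^ b₀ - 1) ≤ τ * a j * (((n:ℝ)+1) ^ (b j)) := by
      have h1 : ((n:ℝ) + 1) ^ b₀ ≤ ((n:ℝ)+1) ^ (b j) :=
        Real.rpow_le_rpow_of_exponent_le hn1 (hb j)
      have h2 : a 0 ≤ a j := hamono (Nat.zero_le j)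
      have e1 := mul_le_mul_of_nonneg_left h1 (mul_nonneg hτ.le (ha j).le)
      have e2 := mul_le_mul_of_nonneg_right (mul_le_mul_of_nonneg_left h2 hτ.le)
        (by linarith : (0:ℝ) ≤ ((n:ℝ) + 1) ^ b₀ - 1)
      nlinarith [e1, e2]
    have hreal : ω ^ (τ * a j * (((n:ℝ)+1) ^ (b j))) ≤ ω ^ (τ * a j) * c n := by
      rw [hc, ← Real.rpow_add hω.1]
      exact Real.rpow_le_rpow_of_exponent_ge hω.1 hω.2.le hexp
    calc f (n+1) ≤ (M : ℝ≥0∞) * ENNReal.ofReal (ω ^ (τ * a j * (((n:ℝ)+1) ^ (b j)))) := by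
          simp only [f]
          rw [hcast]
          exact mul_le_mul' (by exact_mod_cast hmbd (n+1)) le_rfl
      _ ≤ (M : ℝ≥0∞) * ENNReal.ofReal (ω ^ (τ * a j) * c n) :=
          mul_le_mul' le_rfl (ENNReal.ofReal_le_ofReal hreal)
  calc (∑' n, f (n+1)) ≤ ∑' n, (M : ℝ≥0∞) * ENNReal.ofReal (ω ^ (τ * a j) * c n) :=
        ENNReal.tsum_le_tsum step
    _ = (M : ℝ≥0∞) * ∑' n, ENNReal.ofReal (ω ^ (τ * a j) * c n) := ENNReal.tsum_mul_left
    _ = ENNReal.ofReal ((M : ℝ) * (∑' n, c n) * ω ^ (τ * a j)) := by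
        have hnn : ∀ n : ℕ, 0 ≤ ω ^ (τ * a j) * c n := fun n =>
          mul_nonneg (Real.rpow_nonneg hω.1.le _) (Real.rpow_nonneg hω.1.le _)
        have htc : 0 ≤ ∑' n, c n := tsum_nonneg fun n => Real.rpow_nonneg hω.1.le _
        rw [← ENNReal.ofReal_tsum_of_nonneg hnn (hC.mul_left _), tsum_mul_left,
          ENNReal.ofReal_mul (Real.rpow_nonneg hω.1.le _),
          ← ENNReal.ofReal_natCast M, ← mul_assoc, ← ENNReal.ofReal_mul (Nat.cast_nonneg M),
          ← ENNReal.ofReal_mul (by exact mul_nonneg (Nat.cast_nonneg M) (Real.rpow_nonneg hω.1.le _))]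
        congr 1
        ring

lemma T_lower {ω τ b₀ : ℝ} {a b : ℕ → ℝ} {m : ℕ → ℕ}
    (hω : ω ∈ Set.Ioo (0:ℝ) 1) (hb₀ : 0 < b₀) (hb : ∀ j, b₀ ≤ b j)
    (hm : ∀ k, 1 ≤ m k) (hm0 : m 0 = 1) (j : ℕ) :
    1 + ENNReal.ofReal (ω ^ (τ * a j))
      ≤ ∑' n : ℕ, ((m n : ℝ≥0∞) * ENNReal.ofReal (ω ^ (τ * a j * ((n : ℝ) ^ (b j))))) := by
  set f : ℕ → ℝ≥0∞ := fun n => ((m n : ℝ≥0∞) * ENNReal.ofReal (ω ^ (τ * a j * ((n : ℝ) ^ (b j)))))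
  have h0 : f 0 = 1 := by
    simp only [f, hm0, Nat.cast_one, Nat.cast_zero, one_mul]
    rw [Real.zero_rpow (lt_of_lt_of_le hb₀ (hb j)).ne', mul_zero, Real.rpow_zero,
      ENNReal.ofReal_one]
  have h1 : ENNReal.ofReal (ω ^ (τ * a j)) ≤ f 1 := by
    simp only [f, Nat.cast_one]
    rw [Real.one_rpow, mul_one]
    calc ENNReal.ofReal (ω ^ (τ * a j))
        = 1 * ENNReal.ofReal (ω ^ (τ * a j)) := (one_mul _).symm
      _ ≤ (m 1 : ℝ≥0∞) * ENNReal.ofReal (ω ^ (τ * a j)) :=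
          mul_le_mul' (by exact_mod_cast hm 1) le_rfl
  have hrw : (∑' n, f n) = f 0 + ∑' n, f (n + 1) := tsum_eq_zero_add' ENNReal.summable
  rw [show (∑' n : ℕ, ((m n : ℝ≥0∞) * ENNReal.ofReal (ω ^ (τ * a j * ((n : ℝ) ^ (b j))))))
      = (∑' n, f n) from rfl, hrw, h0]
  exact add_le_add le_rfl (le_trans h1 (ENNReal.le_tsum 0))

/-- `∑_k λ_{s,k}^τ = ∑_{k ∈ ℕ₀^s} ∏_j m_{k_j} ω^{τ a_j k_j^{b_j}}` (in `ℝ≥0∞`). -/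
noncomputable def zetaSum (ω : ℝ) (a b : ℕ → ℝ) (m : ℕ → ℕ) (τ : ℝ) (s : ℕ) : ℝ≥0∞ :=
  ∑' k : Fin s → ℕ,
    ∏ j : Fin s, ((m (k j) : ℝ≥0∞) * ENNReal.ofReal (ω ^ (τ * a j * ((k j : ℝ) ^ (b j)))))

lemma zetaSum_eq_prod (ω : ℝ) (a b : ℕ → ℝ) (m : ℕ → ℕ) (τ : ℝ) (s : ℕ) :
    zetaSum ω a b m τ s
      = ∏ j : Fin s, ∑' n : ℕ,
          ((m n : ℝ≥0∞) * ENNReal.ofReal (ω ^ (τ * a (j : ℕ) * ((n : ℝ) ^ (b (j : ℕ)))))) := by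
  unfold zetaSum
  exact tsum_pi_prod s (fun j n =>
    ((m n : ℝ≥0∞) * ENNReal.ofReal (ω ^ (τ * a (j:ℕ) * ((n:ℝ) ^ (b (j:ℕ)))))))

section Part1

variable {ω τ b₀ α : ℝ} {a b : ℕ → ℝ} {m : ℕ → ℕ} {M : ℕ}

lemma part1 (hω : ω ∈ Set.Ioo (0:ℝ) 1)
    (ha : ∀ j, 0 < a j) (hamono : Monotone a)
    (hb₀ : 0 < b₀) (hb : ∀ j, b₀ ≤ b j)
    (hmbd : ∀ k, m k ≤ M) (hm0 : m 0 = 1)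
    (hα : Filter.Tendsto (fun j : ℕ => a j / Real.log (j : ℝ)) atTop (nhds α))
    (hα0 : 0 < α) (hτgt : (α * Real.log ω⁻¹)⁻¹ < τ) :
    (⨆ s : ℕ, zetaSum ω a b m τ s) < ⊤ := by
  set L : ℝ := Real.log ω⁻¹ with hLdef
  have hL : 0 < L := Real.log_pos ((one_lt_inv₀ hω.1).mpr hω.2)
  have hαL : 0 < α * L := by positivity
  have hτ : 0 < τ := lt_trans (by positivity) hτgt
  have hlogω : Real.log ω = -L := by rw [hLdef, Real.log_inv]; ring
  set r : ℕ → ℝ := fun j => ω ^ (τ * a j) with hrdef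
  have hrnn : ∀ j, 0 ≤ r j := fun j => Real.rpow_nonneg hω.1.le _
  have h1τ : 1 < τ * (α * L) := by
    calc (1:ℝ) = (α * L)⁻¹ * (α * L) := (inv_mul_cancel₀ hαL.ne').symm
      _ < τ * (α * L) := by exact mul_lt_mul_of_pos_right hτgt hαL
  obtain ⟨θ, hθ1, hθ2⟩ : ∃ θ : ℝ, 1 < θ ∧ θ < τ * (α * L) :=
    ⟨(1 + τ * (α * L)) / 2, by linarith, by linarith⟩
  have hε : 0 < (τ * (α * L) - θ) / (τ * L) := div_pos (by linarith) (by positivity)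
  have hev : ∀ᶠ j : ℕ in atTop, r j ≤ (j : ℝ) ^ (-θ) := by
    have h1 : ∀ᶠ j : ℕ in atTop, α - (τ * (α * L) - θ) / (τ * L) < a j / Real.log j :=
      hα.eventually (eventually_gt_nhds (by linarith))
    filter_upwards [h1, eventually_ge_atTop 2] with j hj hj2
    have hjR : (2:ℝ) ≤ (j:ℝ) := by exact_mod_cast hj2
    have hlogj : 0 < Real.log (j : ℝ) := Real.log_pos (by linarith)
    have haj : (α - (τ * (α * L) - θ) / (τ * L)) * Real.log j < a j :=
      (lt_div_iff₀ hlogj).mp hj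
    have hkey : θ * Real.log j ≤ τ * L * a j := by
      have hcancel : τ * L * ((τ * (α * L) - θ) / (τ * L)) = τ * (α * L) - θ := by
        field_simp
      have hX : τ * L * (α - (τ * (α * L) - θ) / (τ * L)) = θ := by
        rw [mul_sub, hcancel]; ring
      have h2 := mul_lt_mul_of_pos_left haj (show (0:ℝ) < τ * L by positivity)
      calc θ * Real.log j = τ * L * ((α - (τ * (α * L) - θ) / (τ * L)) * Real.log j) := by
            linear_combination (-Real.log (j:ℝ)) * hX
        _ ≤ τ * L * a j := h2.le
    show ω ^ (τ * a j) ≤ (j:ℝ) ^ (-θ)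
    rw [Real.rpow_def_of_pos hω.1, Real.rpow_def_of_pos (by linarith : (0:ℝ) < (j:ℝ)), hlogω]
    apply Real.exp_le_exp.mpr
    nlinarith [hkey]
  have hrs : Summable r :=
    summable_of_eventually_le hrnn hev (Real.summable_nat_rpow.mpr (by linarith))
  set Cc : ℝ := ∑' n : ℕ, ω ^ (τ * a 0 * (((n : ℝ) + 1) ^ b₀ - 1)) with hCc
  have hCcnn : 0 ≤ Cc := tsum_nonneg fun n => Real.rpow_nonneg hω.1.le _
  set D : ℝ := (M : ℝ) * Cc with hD
  have hDnn : 0 ≤ D := by positivity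
  have hbound : ∀ s, zetaSum ω a b m τ s ≤ ENNReal.ofReal (Real.exp (∑' j, D * r j)) := by
    intro s
    rw [zetaSum_eq_prod]
    calc (∏ j : Fin s, ∑' n : ℕ,
            ((m n : ℝ≥0∞) * ENNReal.ofReal (ω ^ (τ * a (j:ℕ) * ((n : ℝ) ^ (b (j:ℕ)))))))
        ≤ ∏ j : Fin s, (1 + ENNReal.ofReal (D * r (j:ℕ))) := by
          apply Finset.prod_le_prod'
          intro j _
          have := T_upper (τ := τ) (b := b) hω hτ ha hamono hb₀ hb hmbd hm0 (j : ℕ)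
          simpa [hD, hCc, hrdef, mul_assoc] using this
      _ = ∏ j : Fin s, ENNReal.ofReal (1 + D * r (j:ℕ)) := by
          apply Finset.prod_congr rfl
          intro j _
          rw [ENNReal.ofReal_add zero_le_one (mul_nonneg hDnn (hrnn _)), ENNReal.ofReal_one]
      _ = ENNReal.ofReal (∏ j : Fin s, (1 + D * r (j:ℕ))) :=
          (ENNReal.ofReal_prod_of_nonneg fun j _ => by
            have := mul_nonneg hDnn (hrnn (j:ℕ)); linarith).symm
      _ ≤ ENNReal.ofReal (Real.exp (∑' j, D * r j)) := by
          apply ENNReal.ofReal_le_ofReal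
          calc ∏ j : Fin s, (1 + D * r (j:ℕ))
              ≤ ∏ j : Fin s, Real.exp (D * r (j:ℕ)) :=
                Finset.prod_le_prod (fun j _ => by
                    have := mul_nonneg hDnn (hrnn (j:ℕ)); linarith)
                  (fun j _ => by have := Real.add_one_le_exp (D * r (j:ℕ)); linarith)
            _ = Real.exp (∑ j : Fin s, D * r (j:ℕ)) := (Real.exp_sum _ _).symm
            _ ≤ Real.exp (∑' j, D * r j) := by
                apply Real.exp_le_exp.mpr
                rw [Fin.sum_univ_eq_sum_range (fun j => D * r j) s]
                exact Summable.sum_le_tsum (Finset.range s) (fun i _ => mul_nonneg hDnn (hrnn i))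
                  (hrs.mul_left D)
  exact lt_of_le_of_lt (iSup_le hbound) ENNReal.ofReal_lt_top

end Part1

section Part2

variable {ω τ q b₀ : ℝ} {a b : ℕ → ℝ} {m : ℕ → ℕ}

lemma part2 (hω : ω ∈ Set.Ioo (0:ℝ) 1)
    (ha : ∀ j, 0 < a j) (hamono : Monotone a)
    (hb₀ : 0 < b₀) (hb : ∀ j, b₀ ≤ b j)
    (hm : ∀ k, 1 ≤ m k) (hm0 : m 0 = 1)
    (hα : Filter.Tendsto (fun j : ℕ => a j / Real.log (j : ℝ)) atTop (nhds 0))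
    (hτ : 0 < τ) (hq : 0 ≤ q) :
    (⨆ s : ℕ, (zetaSum ω a b m τ (s + 1)) ^ (1 / τ) / (((s : ℝ≥0∞) + 1) ^ q)) = ⊤ := by
  set L : ℝ := Real.log ω⁻¹ with hLdef
  have hL : 0 < L := Real.log_pos ((one_lt_inv₀ hω.1).mpr hω.2)
  have hlogω : Real.log ω = -L := by rw [hLdef, Real.log_inv]; ring
  set r : ℕ → ℝ := fun j => ω ^ (τ * a j) with hrdef
  have hrnn : ∀ j, 0 ≤ r j := fun j => Real.rpow_nonneg hω.1.le _
  have hrle1 : ∀ j, r j ≤ 1 := fun j =>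
    Real.rpow_le_one hω.1.le hω.2.le (mul_nonneg hτ.le (ha j).le)
  -- lower bound for the terms
  have hlow : ∀ s : ℕ,
      ENNReal.ofReal ((((1 + r s) ^ (s+1) : ℝ) ^ (1/τ)) / (((s:ℝ) + 1) ^ q))
        ≤ (zetaSum ω a b m τ (s + 1)) ^ (1 / τ) / (((s : ℝ≥0∞) + 1) ^ q) := by
    intro s
    have hden : ((s : ℝ≥0∞) + 1) ^ q = ENNReal.ofReal (((s:ℝ) + 1) ^ q) := by
      rw [← ENNReal.ofReal_rpow_of_pos (by positivity)]
      congr 1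
      rw [ENNReal.ofReal_add (by positivity) zero_le_one, ENNReal.ofReal_natCast,
        ENNReal.ofReal_one]
    have hX : (0:ℝ) < (1 + r s) ^ (s+1) := pow_pos (by have := hrnn s; linarith) _
    have hnum : ENNReal.ofReal ((1 + r s) ^ (s+1)) ≤ zetaSum ω a b m τ (s + 1) := by
      rw [zetaSum_eq_prod]
      calc ENNReal.ofReal ((1 + r s) ^ (s+1))
          = (ENNReal.ofReal (1 + r s)) ^ (s+1) :=
            ENNReal.ofReal_pow (by have := hrnn s; linarith) _
        _ = (1 + ENNReal.ofReal (r s)) ^ (s+1) := by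
            rw [ENNReal.ofReal_add zero_le_one (hrnn s), ENNReal.ofReal_one]
        _ = ∏ _j : Fin (s+1), (1 + ENNReal.ofReal (r s)) := by
            rw [Finset.prod_const, Finset.card_univ, Fintype.card_fin]
        _ ≤ ∏ j : Fin (s+1), ∑' n : ℕ,
              ((m n : ℝ≥0∞) * ENNReal.ofReal (ω ^ (τ * a (j:ℕ) * ((n : ℝ) ^ (b (j:ℕ)))))) := by
            apply Finset.prod_le_prod'
            intro j _
            refine le_trans ?_ (T_lower (τ := τ) (b := b) hω hb₀ hb hm hm0 (j:ℕ))
            have hrr : r s ≤ r (j:ℕ) := by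
              show ω ^ (τ * a s) ≤ ω ^ (τ * a (j:ℕ))
              exact Real.rpow_le_rpow_of_exponent_ge hω.1 hω.2.le
                (mul_le_mul_of_nonneg_left (hamono (Fin.is_le j)) hτ.le)
            exact add_le_add le_rfl (ENNReal.ofReal_le_ofReal hrr)
    calc ENNReal.ofReal ((((1 + r s) ^ (s+1) : ℝ) ^ (1/τ)) / (((s:ℝ) + 1) ^ q))
        = ENNReal.ofReal (((1 + r s) ^ (s+1) : ℝ) ^ (1/τ)) / ENNReal.ofReal (((s:ℝ) + 1) ^ q) :=
          ENNReal.ofReal_div_of_pos (by positivity)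
      _ = (ENNReal.ofReal ((1 + r s) ^ (s+1))) ^ (1/τ) / ENNReal.ofReal (((s:ℝ) + 1) ^ q) := by
          rw [ENNReal.ofReal_rpow_of_pos hX]
      _ ≤ (zetaSum ω a b m τ (s + 1)) ^ (1 / τ) / ENNReal.ofReal (((s:ℝ) + 1) ^ q) :=
          ENNReal.div_le_div_right (ENNReal.rpow_le_rpow hnum (by positivity)) _
      _ = (zetaSum ω a b m τ (s + 1)) ^ (1 / τ) / (((s : ℝ≥0∞) + 1) ^ q) := by rw [hden]
  -- the real lower bound tends to infinity
  have hE : Filter.Tendsto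
      (fun s : ℕ => (((1 + r s) ^ (s+1) : ℝ) ^ (1/τ)) / (((s:ℝ) + 1) ^ q)) atTop atTop := by
    have hEexp : ∀ s : ℕ,
        (((1 + r s) ^ (s+1) : ℝ) ^ (1/τ)) / (((s:ℝ) + 1) ^ q)
          = Real.exp ((((s:ℝ)+1) * Real.log (1 + r s)) * (1/τ) - Real.log ((s:ℝ)+1) * q) := by
      intro s
      have h1 : (0:ℝ) < (1 + r s) ^ (s+1) := pow_pos (by have := hrnn s; linarith) _
      rw [Real.rpow_def_of_pos h1, Real.rpow_def_of_pos (by positivity : (0:ℝ) < (s:ℝ)+1),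
        Real.log_pow, ← Real.exp_sub]
      congr 2
      push_cast
      ring
    simp only [hEexp]
    apply Real.tendsto_exp_atTop.comp
    -- eventual lower bound by s^(1/2) / (4τ)
    have hlb : ∀ᶠ s : ℕ in atTop,
        (s:ℝ) ^ ((1:ℝ)/2) * (1/(4*τ))
          ≤ (((s:ℝ)+1) * Real.log (1 + r s)) * (1/τ) - Real.log ((s:ℝ)+1) * q := by
      have hev1 : ∀ᶠ s : ℕ in atTop, a s / Real.log s < 1/(2*τ*L) :=
        hα.eventually (eventually_lt_nhds (by positivity))
      have hev2 := log_le_eventually (K := 1/(8*τ*(q+1))) (c := (1:ℝ)/2) (by positivity)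
        (by norm_num)
      filter_upwards [hev1, hev2, eventually_ge_atTop 2] with s h1 h2 hs2
      have hsR : (2:ℝ) ≤ (s:ℝ) := by exact_mod_cast hs2
      have hs0 : (0:ℝ) < (s:ℝ) := by linarith
      have hlogs : 0 < Real.log (s:ℝ) := Real.log_pos (by linarith)
      -- r s ≥ s^(-1/2)
      have hras : τ * L * a s ≤ Real.log s / 2 := by
        have := (div_lt_iff₀ hlogs).mp h1
        have h3 : τ * L * (a s) < τ * L * (1/(2*τ*L) * Real.log s) := by
          apply mul_lt_mul_of_pos_left this (by positivity)
        have h4 : τ * L * (1/(2*τ*L) * Real.log s) = Real.log s / 2 := by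
          field_simp
        linarith
      have hrs : (s:ℝ) ^ (-(1:ℝ)/2) ≤ r s := by
        show _ ≤ ω ^ (τ * a s)
        rw [Real.rpow_def_of_pos hω.1, Real.rpow_def_of_pos hs0, hlogω]
        apply Real.exp_le_exp.mpr
        nlinarith [hras]
      -- log (1 + r s) ≥ r s / 2
      have hlog1r : r s / 2 ≤ Real.log (1 + r s) := by
        have hpos : (0:ℝ) < 1 + r s := by have := hrnn s; linarith
        have hinv := Real.log_le_sub_one_of_pos (show (0:ℝ) < (1 + r s)⁻¹ by positivity)
        rw [Real.log_inv] at hinv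
        have h5 : 1 - (1 + r s)⁻¹ ≤ Real.log (1 + r s) := by linarith
        have h6 : 1 - (1 + r s)⁻¹ = r s / (1 + r s) := by field_simp; ring
        have h7 : r s / 2 ≤ r s / (1 + r s) := by
          rw [div_le_div_iff₀ (by norm_num) hpos]
          nlinarith [hrnn s, hrle1 s]
        linarith
      have hs12 : (0:ℝ) < (s:ℝ) ^ ((1:ℝ)/2) := Real.rpow_pos_of_pos hs0 _
      have hsplit : ((s:ℝ)+1) ^ ((1:ℝ)/2) ≤ 2 * (s:ℝ) ^ ((1:ℝ)/2) := by
        calc ((s:ℝ)+1) ^ ((1:ℝ)/2) ≤ ((2:ℝ)*s) ^ ((1:ℝ)/2) :=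
              Real.rpow_le_rpow (by positivity) (by linarith) (by norm_num)
          _ = (2:ℝ) ^ ((1:ℝ)/2) * (s:ℝ) ^ ((1:ℝ)/2) := Real.mul_rpow (by norm_num) hs0.le
          _ ≤ 2 * (s:ℝ) ^ ((1:ℝ)/2) := by
              have h2le : (2:ℝ) ^ ((1:ℝ)/2) ≤ 2 := by
                calc (2:ℝ) ^ ((1:ℝ)/2) ≤ (2:ℝ) ^ (1:ℝ) :=
                      Real.rpow_le_rpow_of_exponent_le (by norm_num) (by norm_num)
                  _ = 2 := Real.rpow_one 2
              nlinarith [hs12]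
      have hcoef : 1/(8*τ*(q+1)) * 2 * q ≤ 1/(4*τ) := by
        rw [div_mul_eq_mul_div, div_mul_eq_mul_div,
          div_le_div_iff₀ (by positivity) (by positivity)]
        nlinarith
      have hlogq : Real.log ((s:ℝ)+1) * q ≤ (s:ℝ) ^ ((1:ℝ)/2) * (1/(4*τ)) := by
        have e1 : Real.log ((s:ℝ)+1) ≤ 1/(8*τ*(q+1)) * (2 * (s:ℝ) ^ ((1:ℝ)/2)) :=
          le_trans h2 (mul_le_mul_of_nonneg_left hsplit (by positivity))
        calc Real.log ((s:ℝ)+1) * q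
            ≤ (1/(8*τ*(q+1)) * (2 * (s:ℝ) ^ ((1:ℝ)/2))) * q :=
              mul_le_mul_of_nonneg_right e1 hq
          _ = (1/(8*τ*(q+1)) * 2 * q) * (s:ℝ) ^ ((1:ℝ)/2) := by ring
          _ ≤ (1/(4*τ)) * (s:ℝ) ^ ((1:ℝ)/2) :=
              mul_le_mul_of_nonneg_right hcoef hs12.le
          _ = (s:ℝ) ^ ((1:ℝ)/2) * (1/(4*τ)) := mul_comm _ _
      have hss : (s:ℝ) * (s:ℝ) ^ (-(1:ℝ)/2) = (s:ℝ) ^ ((1:ℝ)/2) := by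
        have h := (Real.rpow_add hs0 1 (-(1:ℝ)/2)).symm
        rw [Real.rpow_one] at h
        norm_num at h ⊢
        exact h
      have hmain : (s:ℝ) ^ ((1:ℝ)/2) * (1/(2*τ)) ≤ (((s:ℝ)+1) * Real.log (1+r s)) * (1/τ) := by
        have e2 : (s:ℝ) * ((s:ℝ) ^ (-(1:ℝ)/2) / 2) ≤ ((s:ℝ)+1) * Real.log (1+r s) := by
          apply mul_le_mul (by linarith) (by linarith [hrs, hlog1r]) (by positivity) (by linarith)
        calc (s:ℝ) ^ ((1:ℝ)/2) * (1/(2*τ)) = ((s:ℝ) * ((s:ℝ) ^ (-(1:ℝ)/2) / 2)) * (1/τ) := by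
              rw [← hss]; ring
          _ ≤ (((s:ℝ)+1) * Real.log (1+r s)) * (1/τ) :=
              mul_le_mul_of_nonneg_right e2 (by positivity)
      have hsub : (s:ℝ) ^ ((1:ℝ)/2) * (1/(2*τ)) - (s:ℝ) ^ ((1:ℝ)/2) * (1/(4*τ))
          = (s:ℝ) ^ ((1:ℝ)/2) * (1/(4*τ)) := by
        field_simp
        ring
      linarith [hmain, hlogq, hsub]
    exact tendsto_atTop_mono' atTop hlb
      (Tendsto.atTop_mul_const (by positivity)
        ((tendsto_rpow_atTop (by norm_num)).comp tendsto_natCast_atTop_atTop))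
  rw [iSup_eq_top]
  intro c hc
  obtain ⟨s, hs⟩ := (hE.eventually_gt_atTop c.toReal).exists
  exact ⟨s, lt_of_lt_of_le ((ENNReal.lt_ofReal_iff_toReal_lt hc.ne).mpr hs) (hlow s)⟩

end Part2

/-- Strong polynomial tractability criterion: assume `m_0 = 1` and
`α = lim_j a_j / log j` exists. If `α > 0` then for every `τ > 1/(α log ω⁻¹)`,
`sup_s ∑_k λ_{s,k}^τ < ∞`; if `α = 0` then for every `τ > 0` and `q ≥ 0`,
`sup_s (∑_k λ_{s,k}^τ)^{1/τ} s^{-q} = ∞`. -/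
theorem stmt19 (ω : ℝ) (hω : ω ∈ Set.Ioo (0:ℝ) 1)
    (a b : ℕ → ℝ) (ha : ∀ j, 0 < a j) (hamono : Monotone a)
    (b₀ : ℝ) (hb₀ : 0 < b₀) (hb : ∀ j, b₀ ≤ b j)
    (m : ℕ → ℕ) (hm : ∀ k, 1 ≤ m k) (hmbd : ∃ M, ∀ k, m k ≤ M) (hm0 : m 0 = 1)
    (α : ℝ)
    (hα : Filter.Tendsto (fun j : ℕ => a j / Real.log (j : ℝ)) Filter.atTop (nhds α)) :
    (0 < α → ∀ τ : ℝ, (α * Real.log ω⁻¹)⁻¹ < τ →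
      (⨆ s : ℕ, zetaSum ω a b m τ s) < ⊤) ∧
    (α = 0 → ∀ τ q : ℝ, 0 < τ → 0 ≤ q →
      (⨆ s : ℕ, (zetaSum ω a b m τ (s + 1)) ^ (1 / τ) / (((s : ℝ≥0∞) + 1) ^ q)) = ⊤) := by
  obtain ⟨M, hM⟩ := hmbd
  constructor
  · intro hα0 τ hτgt
    exact part1 hω ha hamono hb₀ hb hM hm0 hα hα0 hτgt
  · intro hα0 τ q hτ hq
    rw [hα0] at hα
    exact part2 hω ha hamono hb₀ hb hm hm0 hα hτ hq
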